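/- Let H : ℝ^k → ℝ be continuously differentiable, let S be a constant skew-symmetric k×k real matrix, let Δt > 0, and suppose u₀, u₁ ∈ ℝ^k satisfy the average vector field relation (u₁ - u₀)/Δt = ∫₀¹ S ∇H((1-ξ)u₀ + ξu₁) dξ. Then the energy is preserved exactly: H(u₁) = H(u₀). -/

import Mathlib

open Matrix intervalIntegral

/-- Exact energy preservation by the average vector field (AVF) method applied to
the skew-gradient system `u' = S ∇H(u)` with constant skew-symmetric `S`. -/
theorem avf_energy_preservation {k : ℕ}
    (H : EuclideanSpace ℝ (Fin k) → ℝ) (hH : ContDiff ℝ 1 H)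
    (S : Matrix (Fin k) (Fin k) ℝ) (hS : Sᵀ = -S)
    (Δt : ℝ) (hΔt : 0 < Δt) (u₀ u₁ : EuclideanSpace ℝ (Fin k))
    (havf : Δt⁻¹ • (u₁ - u₀) = ∫ ξ in (0:ℝ)..1,
      ((WithLp.toLp 2 (S.mulVec ((gradient H ((1 - ξ) • u₀ + ξ • u₁) : EuclideanSpace ℝ (Fin k)))) :
        EuclideanSpace ℝ (Fin k)))) :
    H u₁ = H u₀ := by
  set v : EuclideanSpace ℝ (Fin k) := u₁ - u₀ with hv
  set γ : ℝ → EuclideanSpace ℝ (Fin k) := fun ξ => (1 - ξ) • u₀ + ξ • u₁ with hγ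
  -- continuity of the gradient
  have hgrad_cont : Continuous (fun x : EuclideanSpace ℝ (Fin k) => gradient H x) :=
    ((InnerProductSpace.toDual ℝ (EuclideanSpace ℝ (Fin k))).symm.continuous).comp
      (hH.continuous_fderiv one_ne_zero)
  have hγ_cont : Continuous γ := by fun_prop
  have hg_cont : Continuous (fun ξ : ℝ => gradient H (γ ξ)) := hgrad_cont.comp hγ_cont
  -- derivative of H ∘ γ
  have key : ∀ ξ : ℝ, HasDerivAt (fun t => H (γ t))
      (inner ℝ (gradient H (γ ξ)) v : ℝ) ξ := by
    intro ξ
    have hγd : HasDerivAt γ v ξ := by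
      have h := (((hasDerivAt_id ξ).smul_const (u₁ - u₀)).const_add u₀)
      have heq : γ = fun t : ℝ => u₀ + t • (u₁ - u₀) := by
        funext t
        simp only [hγ, smul_sub, sub_smul, one_smul]
        abel
      rw [heq, hv]
      simpa using h
    have hHd : HasFDerivAt H
        (InnerProductSpace.toDual ℝ (EuclideanSpace ℝ (Fin k)) (gradient H (γ ξ))) (γ ξ) :=
      ((hH.differentiable one_ne_zero (γ ξ)).hasGradientAt).hasFDerivAt
    have := hHd.comp_hasDerivAt ξ hγd
    rw [InnerProductSpace.toDual_apply_apply] at this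
    exact this
  -- FTC
  have hcont : Continuous fun ξ : ℝ => (inner ℝ (gradient H (γ ξ)) v : ℝ) :=
    continuous_inner.comp (hg_cont.prodMk continuous_const)
  have hFTC : (∫ ξ in (0:ℝ)..1, (inner ℝ (gradient H (γ ξ)) v : ℝ))
      = H (γ 1) - H (γ 0) :=
    intervalIntegral.integral_eq_sub_of_hasDerivAt (fun ξ _ => key ξ)
      (hcont.intervalIntegrable 0 1)
  have hγ0 : γ 0 = u₀ := by simp [hγ]
  have hγ1 : γ 1 = u₁ := by simp [hγ]
  -- pull the inner product out of the integral
  set G : EuclideanSpace ℝ (Fin k) := ∫ ξ in (0:ℝ)..1, gradient H (γ ξ) with hG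
  have hint : IntervalIntegrable (fun ξ : ℝ => gradient H (γ ξ))
      MeasureTheory.volume 0 1 := hg_cont.intervalIntegrable 0 1
  have hinner_int : (∫ ξ in (0:ℝ)..1, (inner ℝ (gradient H (γ ξ)) v : ℝ))
      = inner ℝ G v := by
    have h1 : ∀ ξ : ℝ, (inner ℝ (gradient H (γ ξ)) v : ℝ)
        = (innerSL ℝ v) (gradient H (γ ξ)) := by
      intro ξ; simp only [innerSL_apply_apply]; exact real_inner_comm _ _
    simp_rw [h1]
    rw [(innerSL ℝ v).intervalIntegral_comp_comm hint]
    simp only [innerSL_apply_apply]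
    rw [← hG]
    exact real_inner_comm G v
  -- pull S out of the integral
  set L : EuclideanSpace ℝ (Fin k) →L[ℝ] EuclideanSpace ℝ (Fin k) :=
    LinearMap.toContinuousLinearMap (Matrix.toEuclideanLin S) with hL
  have hLapp : ∀ x : EuclideanSpace ℝ (Fin k), L x = (WithLp.toLp 2 (S.mulVec x) : EuclideanSpace ℝ (Fin k)) :=
    fun x => rfl
  have hSv : Δt⁻¹ • v = L G := by
    have hintS : IntervalIntegrable (fun ξ : ℝ => L (gradient H (γ ξ)))
        MeasureTheory.volume 0 1 := (L.continuous.comp hg_cont).intervalIntegrable 0 1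
    set e := PiLp.continuousLinearEquiv 2 ℝ (fun _ : Fin k => ℝ) with he
    have hcomm := (e.toContinuousLinearMap).intervalIntegral_comp_comm hintS
    have h7 : e (∫ ξ in (0:ℝ)..1, L (gradient H (γ ξ))) = L G := by
      rw [L.intervalIntegral_comp_comm hint, hG]
      rfl
    rw [hv, havf, ← L.intervalIntegral_comp_comm hint]
    rfl
  have hvLG : v = Δt • L G := by
    rw [← hSv, smul_smul, mul_inv_cancel₀ (ne_of_gt hΔt), one_smul]
  -- skew-symmetry kills the inner product
  have hskew : (inner ℝ G (L G) : ℝ) = 0 := by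
    have h1 : (inner ℝ G (L G) : ℝ) = G ⬝ᵥ S.mulVec G := by
      rw [hLapp]
      simp [EuclideanSpace.inner_eq_star_dotProduct, dotProduct, Matrix.mulVec, mul_comm]
    have h2 : G ⬝ᵥ S.mulVec G = -(G ⬝ᵥ S.mulVec G) := by
      calc G ⬝ᵥ S.mulVec G = S.vecMul G ⬝ᵥ G := Matrix.dotProduct_mulVec G S G
        _ = Sᵀ.mulVec G ⬝ᵥ G := by rw [Matrix.mulVec_transpose]
        _ = (-S).mulVec G ⬝ᵥ G := by rw [hS]
        _ = -(S.mulVec G ⬝ᵥ G) := by simp [Matrix.neg_mulVec]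
        _ = -(G ⬝ᵥ S.mulVec G) := by rw [dotProduct_comm]
    have h3 : G ⬝ᵥ S.mulVec G = 0 := by linarith
    rw [h1, h3]
  have hfinal : H u₁ - H u₀ = 0 := by
    rw [← hγ0, ← hγ1, ← hFTC, hinner_int, hvLG, real_inner_smul_right, hskew, mul_zero]
  linarith
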